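/- Let K be an algebraically closed field and p ∈ K⟨x_1,...,x_n⟩ a non-commutative polynomial with zero constant term such that p does not vanish identically on K (i.e., there exist scalars c_1,...,c_n ∈ K with p(c_1,...,c_n) ≠ 0). Then every m×m upper triangular matrix over K with pairwise distinct diagonal entries lies in the image of p evaluated on T_m(K)^n. -/

import Mathlib

open Matrix Finset

/-- Scalar surjectivity: every element of K is a value of p. -/
lemma aux_scalar_surj {K : Type*} [Field K] [IsAlgClosed K] {n : ℕ}
    (p : FreeAlgebra K (Fin n))
    (h0 : (FreeAlgebra.lift K (fun _ : Fin n => (0 : K))) p = 0)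
    (hK : ∃ c : Fin n → K, (FreeAlgebra.lift K c) p ≠ 0) (a : K) :
    ∃ c : Fin n → K, (FreeAlgebra.lift K c) p = a := by
  obtain ⟨c, hc⟩ := hK
  set q : Polynomial K :=
    (FreeAlgebra.lift K (fun i => Polynomial.C (c i) * Polynomial.X)) p with hq
  have heval : ∀ t : K, q.eval t = (FreeAlgebra.lift K (fun i => c i * t)) p := by
    intro t
    have : (Polynomial.aeval t).comp (FreeAlgebra.lift K (fun i => Polynomial.C (c i) * Polynomial.X))
        = FreeAlgebra.lift K (fun i => c i * t) := by
      apply FreeAlgebra.hom_ext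
      funext i
      simp
    calc q.eval t = Polynomial.aeval t q := (Polynomial.coe_aeval_eq_eval t ▸ rfl)
      _ = ((Polynomial.aeval t).comp
          (FreeAlgebra.lift K (fun i => Polynomial.C (c i) * Polynomial.X))) p := rfl
      _ = _ := by rw [this]
  have hq0 : q.eval 0 = 0 := by
    rw [heval]
    simpa using h0
  have hq1 : q.eval 1 ≠ 0 := by
    rw [heval]
    simpa using hc
  have hdeg : 0 < q.degree := by
    by_contra h
    push_neg at h
    have ha0 := Polynomial.degree_le_zero_iff.mp h
    rw [ha0] at hq0 hq1
    simp only [Polynomial.eval_C] at hq0 hq1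
    exact hq1 hq0
  have hdeg2 : (q - Polynomial.C a).degree = q.degree :=
    Polynomial.degree_sub_eq_left_of_degree_lt
      (lt_of_le_of_lt Polynomial.degree_C_le hdeg)
  obtain ⟨t, ht⟩ := IsAlgClosed.exists_root (q - Polynomial.C a)
    (by rw [hdeg2]; exact hdeg.ne')
  refine ⟨fun i => c i * t, ?_⟩
  rw [← heval t]
  have : q.eval t - a = 0 := by simpa [Polynomial.IsRoot] using ht
  exact sub_eq_zero.mp this

/-- Diagonal evaluation is componentwise. -/
lemma aux_lift_diagonal {K : Type*} [Field K] {n m : ℕ}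
    (c : Fin m → Fin n → K) (p : FreeAlgebra K (Fin n)) :
    (FreeAlgebra.lift K (fun i => Matrix.diagonal (fun j => c j i))) p
      = Matrix.diagonal (fun j => (FreeAlgebra.lift K (c j)) p) := by
  have : FreeAlgebra.lift K (fun i => Matrix.diagonal (fun j => c j i))
      = (Matrix.diagonalAlgHom K (n := Fin m) (α := K)).comp
          (Pi.algHom K _ (fun j => FreeAlgebra.lift K (c j))) := by
    apply FreeAlgebra.hom_ext
    funext i
    simp [Matrix.diagonalAlgHom_apply]
  rw [this]
  rfl

/-- The triangularizing matrix entries, defined by downward recursion. -/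
noncomputable def svec {K : Type*} [Field K] {m : ℕ}
    (A : Matrix (Fin m) (Fin m) K) (i j : Fin m) : K :=
  if i = j then 1
  else if i < j then
    -(A i i - A j j)⁻¹ *
      ∑ k ∈ (Finset.univ.filter (fun k : Fin m => i < k)).attach,
        A i k.1 * svec A k.1 j
  else 0
termination_by m - i.1
decreasing_by
  have hk := k.2
  simp only [Finset.mem_filter, Finset.mem_univ, true_and] at hk
  have := k.1.2
  omega

lemma svec_zero {K : Type*} [Field K] {m : ℕ} (A : Matrix (Fin m) (Fin m) K)
    {i j : Fin m} (h : j < i) : svec A i j = 0 := by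
  rw [svec]
  rw [if_neg (by exact fun h' => absurd h' (by simp [h.ne'])), if_neg (by exact fun h' => absurd h (not_lt.mpr h'.le))]

lemma svec_diag {K : Type*} [Field K] {m : ℕ} (A : Matrix (Fin m) (Fin m) K)
    (i : Fin m) : svec A i i = 1 := by
  rw [svec, if_pos rfl]

lemma svec_bt {K : Type*} [Field K] {m : ℕ} (A : Matrix (Fin m) (Fin m) K) :
    (Matrix.of (svec A)).BlockTriangular id :=
  fun _ _ h => svec_zero A h

lemma svec_key {K : Type*} [Field K] {m : ℕ} (A : Matrix (Fin m) (Fin m) K)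
    (hA : A.BlockTriangular id)
    (hdiag : ∀ i j : Fin m, i ≠ j → A i i ≠ A j j) :
    A * Matrix.of (svec A)
      = Matrix.of (svec A) * Matrix.diagonal (fun j => A j j) := by
  ext i j
  rw [Matrix.mul_apply, Matrix.mul_apply]
  have hrhs : (∑ x, Matrix.of (svec A) i x * Matrix.diagonal (fun j => A j j) x j)
      = svec A i j * A j j := by
    rw [Finset.sum_eq_single j]
    · simp
    · intro k _ hk
      rw [Matrix.diagonal_apply_ne _ hk, mul_zero]
    · intro h
      simp at h
  rw [hrhs]
  simp only [Matrix.of_apply]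
  -- goal : ∑ k, A i k * svec A k j = svec A i j * A j j
  have hsplit :
      (∑ k, A i k * svec A k j)
        = A i i * svec A i j + ∑ k ∈ Finset.univ.filter (fun k : Fin m => i < k),
            A i k * svec A k j := by
    rw [← Finset.sum_filter_add_sum_filter_not Finset.univ (fun k : Fin m => i < k)]
    rw [add_comm]
    congr 1
    rw [Finset.sum_eq_single i]
    · intro k hk hki
      rcases lt_or_gt_of_ne hki with h | h
      · exact mul_eq_zero_of_left (hA h) _
      · simp only [Finset.mem_filter, Finset.mem_univ, true_and, not_lt] at hk
        exact absurd h (not_lt.mpr hk)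
    · intro h
      simp at h
  rw [hsplit]
  rcases lt_trichotomy i j with hij | hij | hij
  · -- i < j
    have hne : A i i - A j j ≠ 0 := sub_ne_zero.mpr (hdiag i j hij.ne)
    have hdef : svec A i j = -(A i i - A j j)⁻¹ *
        ∑ k ∈ (Finset.univ.filter (fun k : Fin m => i < k)).attach,
          A i k.1 * svec A k.1 j := by
      rw [svec, if_neg hij.ne, if_pos hij]
    rw [Finset.sum_attach _ (fun k => A i k * svec A k j)] at hdef
    have hT : (∑ k ∈ Finset.univ.filter (fun k : Fin m => i < k),
        A i k * svec A k j) = (A j j - A i i) * svec A i j := by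
      rw [hdef]
      field_simp
      ring
    rw [hT]
    ring
  · subst hij
    rw [svec_diag]
    have : (∑ k ∈ Finset.univ.filter (fun k : Fin m => i < k),
        A i k * svec A k i) = 0 := by
      apply Finset.sum_eq_zero
      intro k hk
      simp only [Finset.mem_filter, Finset.mem_univ, true_and] at hk
      rw [svec_zero A hk, mul_zero]
    rw [this]
    ring
  · -- j < i
    have h2 : (∑ k ∈ Finset.univ.filter (fun k : Fin m => i < k),
        A i k * svec A k j) = 0 := by
      apply Finset.sum_eq_zero
      intro k hk
      simp only [Finset.mem_filter, Finset.mem_univ, true_and] at hk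
      rw [svec_zero A (hij.trans hk), mul_zero]
    rw [svec_zero A hij, h2]
    ring

/-- Conjugation by an invertible matrix as an algebra homomorphism. -/
noncomputable def conjAlgHom {K : Type*} [Field K] {m : ℕ}
    (S : Matrix (Fin m) (Fin m) K) (h1 : S * S⁻¹ = 1) (h2 : S⁻¹ * S = 1) :
    Matrix (Fin m) (Fin m) K →ₐ[K] Matrix (Fin m) (Fin m) K where
  toFun x := S * x * S⁻¹
  map_one' := by
    show S * 1 * S⁻¹ = 1
    rw [mul_one, h1]
  map_mul' x y := by
    show S * (x * y) * S⁻¹ = (S * x * S⁻¹) * (S * y * S⁻¹)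
    have h : (S * x * S⁻¹) * (S * y * S⁻¹) = S * x * (S⁻¹ * S) * (y * S⁻¹) := by
      noncomm_ring
    rw [h, h2]
    noncomm_ring
  map_zero' := by
    show S * 0 * S⁻¹ = 0
    simp
  map_add' x y := by
    show S * (x + y) * S⁻¹ = S * x * S⁻¹ + S * y * S⁻¹
    rw [mul_add, add_mul]
  commutes' r := by
    show S * algebraMap K _ r * S⁻¹ = algebraMap K _ r
    simp only [Algebra.algebraMap_eq_smul_one, mul_smul_comm, smul_mul_assoc, mul_one, h1]

theorem stmt8 {K : Type*} [Field K] [IsAlgClosed K] {n m : ℕ}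
    (p : FreeAlgebra K (Fin n))
    (h0 : (FreeAlgebra.lift K (fun _ : Fin n => (0 : K))) p = 0)
    (hK : ∃ c : Fin n → K, (FreeAlgebra.lift K c) p ≠ 0)
    (A : Matrix (Fin m) (Fin m) K) (hA : A.BlockTriangular id)
    (hdiag : ∀ i j : Fin m, i ≠ j → A i i ≠ A j j) :
    ∃ u : Fin n → Matrix (Fin m) (Fin m) K,
      (∀ i, (u i).BlockTriangular id) ∧ (FreeAlgebra.lift K u) p = A := by
  -- scalars realizing each diagonal entry
  choose c hc using fun j : Fin m => aux_scalar_surj p h0 hK (A j j)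
  set D : Matrix (Fin m) (Fin m) K := Matrix.diagonal (fun j => A j j) with hD
  set v : Fin n → Matrix (Fin m) (Fin m) K :=
    fun i => Matrix.diagonal (fun j => c j i) with hv
  have hvD : (FreeAlgebra.lift K v) p = D := by
    rw [hv, aux_lift_diagonal]
    simp [hD, hc]
  set S : Matrix (Fin m) (Fin m) K := Matrix.of (svec A) with hS
  have hSbt : S.BlockTriangular id := svec_bt A
  have hdet : S.det = 1 := by
    rw [Matrix.det_of_upperTriangular hSbt]
    simp [hS, svec_diag]
  have hunit : IsUnit S.det := by rw [hdet]; exact isUnit_one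
  have h1 : S * S⁻¹ = 1 := Matrix.mul_nonsing_inv S hunit
  have h2 : S⁻¹ * S = 1 := Matrix.nonsing_inv_mul S hunit
  haveI : Invertible S := S.invertibleOfIsUnitDet hunit
  have hSinvbt : S⁻¹.BlockTriangular id :=
    Matrix.blockTriangular_inv_of_blockTriangular hSbt
  have hASD : A = S * D * S⁻¹ := by
    have := svec_key A hA hdiag
    calc A = A * (S * S⁻¹) := by rw [h1, mul_one]
      _ = A * S * S⁻¹ := by rw [mul_assoc]
      _ = S * D * S⁻¹ := by rw [this, hS, hD]
  refine ⟨fun i => S * v i * S⁻¹, fun i => (hSbt.mul (Matrix.blockTriangular_diagonal _)).mul hSinvbt, ?_⟩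
  have hcomp : FreeAlgebra.lift K (fun i => S * v i * S⁻¹)
      = (conjAlgHom S h1 h2).comp (FreeAlgebra.lift K v) := by
    apply FreeAlgebra.hom_ext
    funext i
    simp [conjAlgHom]
  rw [hcomp, AlgHom.comp_apply, hvD, hASD]
  rfl
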